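/- The eigenvalues of the (n+1)×(n+1) Kac matrix S_n are exactly the n+1 distinct integers n, n−2, n−4, ..., −n+2, −n, each with algebraic multiplicity one. -/

import Mathlib

open Polynomial

/-- The `(n+1) × (n+1)` Kac matrix: subdiagonal entries `1, 2, ..., n`,
superdiagonal entries `n, n-1, ..., 1`, and zeros elsewhere. -/
def kacMatrix (n : ℕ) : Matrix (Fin (n + 1)) (Fin (n + 1)) ℝ :=
  Matrix.of fun i j =>
    if (i : ℕ) = (j : ℕ) + 1 then (i : ℝ)
    else if (j : ℕ) = (i : ℕ) + 1 then (n : ℝ) + 1 - (j : ℝ)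
    else 0

section Aux

lemma kac_aux_sub (a : ℕ) :
    ((1:ℝ[X]) - X) * derivative ((1 - X)^a) = -(C (a:ℝ) * (1 - X)^a) := by
  cases a with
  | zero => simp
  | succ a =>
    rw [derivative_pow]
    simp only [derivative_sub, derivative_one, derivative_X, zero_sub, Nat.succ_sub_one,
      Nat.cast_succ, map_add, _root_.map_one]
    ring

lemma kac_aux_add (b : ℕ) :
    ((1:ℝ[X]) + X) * derivative ((1 + X)^b) = C (b:ℝ) * (1 + X)^b := by
  cases b with
  | zero => simp
  | succ b =>
    rw [derivative_pow]
    simp only [derivative_add, derivative_one, derivative_X, zero_add, Nat.cast_succ,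
      Nat.succ_sub_one, map_add, _root_.map_one]
    ring

lemma kac_key_ab (a b : ℕ) :
    ((1:ℝ[X]) - X^2) * derivative ((1-X)^a * (1+X)^b)
      + (C (a:ℝ) + C (b:ℝ)) * (X * ((1-X)^a*(1+X)^b))
    = (C (b:ℝ) - C (a:ℝ)) * ((1-X)^a*(1+X)^b) := by
  have h1 := kac_aux_sub a
  have h2 := kac_aux_add b
  rw [derivative_mul]
  linear_combination ((1+X)*(1+X)^b) * h1 + ((1-X)*(1-X)^a) * h2

noncomputable def kacP (n d : ℕ) : ℝ[X] := (1 - X)^d * (1 + X)^(n - d)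

lemma kacP_key (n d : ℕ) (hd : d ≤ n) :
    derivative (kacP n d) + C (n:ℝ) * (kacP n d * X)
      = C ((n:ℝ) - 2*d) * kacP n d + derivative (kacP n d) * X^2 := by
  have h := kac_key_ab d (n - d)
  have e1 : ((n - d : ℕ) : ℝ) = (n:ℝ) - d := by
    push_cast [Nat.cast_sub hd]; ring
  rw [e1] at h
  unfold kacP
  have hC : (C ((d:ℝ)) + C ((n:ℝ) - d)) = C (n:ℝ) := by rw [← map_add]; ring_nf
  have hC2 : (C ((n:ℝ) - d) - C ((d:ℝ))) = C ((n:ℝ) - 2*d) := by rw [← map_sub]; ring_nf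
  rw [hC, hC2] at h
  linear_combination h

lemma kacP_coeff_zero (n d : ℕ) : (kacP n d).coeff 0 = 1 := by
  rw [coeff_zero_eq_eval_zero]
  simp [kacP]

lemma kacP_natDegree (n d : ℕ) (hd : d ≤ n) : (kacP n d).natDegree ≤ n := by
  have h1 : ((1:ℝ[X]) - X).natDegree = 1 := by
    have : ((1:ℝ[X]) - X) = -(X - C 1) := by rw [_root_.map_one]; ring
    rw [this, natDegree_neg, natDegree_X_sub_C]
  have h2 : ((1:ℝ[X]) + X).natDegree = 1 := by
    have : ((1:ℝ[X]) + X) = X - C (-1) := by rw [map_neg, _root_.map_one]; ring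
    rw [this, natDegree_X_sub_C]
  calc (kacP n d).natDegree ≤ ((1-X:ℝ[X])^d).natDegree + ((1+X:ℝ[X])^(n-d)).natDegree :=
        natDegree_mul_le
    _ ≤ d * 1 + (n - d) * 1 := by
        gcongr <;> [exact h1 ▸ natDegree_pow_le; exact h2 ▸ natDegree_pow_le]
    _ ≤ n := by omega

lemma kacP_coeff_hi (n d k : ℕ) (hd : d ≤ n) (hk : n < k) : (kacP n d).coeff k = 0 :=
  coeff_eq_zero_of_natDegree_lt (lt_of_le_of_lt (kacP_natDegree n d hd) hk)

lemma kacP_rec0 (n d : ℕ) (hd : d ≤ n) :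
    (kacP n d).coeff 1 = ((n:ℝ) - 2*d) * (kacP n d).coeff 0 := by
  have := congrArg (fun q : ℝ[X] => q.coeff 0) (kacP_key n d hd)
  simpa [coeff_mul_X_pow', coeff_derivative] using this

lemma kacP_rec (n d : ℕ) (hd : d ≤ n) (j : ℕ) :
    ((j:ℝ)+2) * (kacP n d).coeff (j+2) + ((n:ℝ) - j) * (kacP n d).coeff j
      = ((n:ℝ) - 2*d) * (kacP n d).coeff (j+1) := by
  have h := congrArg (fun q : ℝ[X] => q.coeff (j+1)) (kacP_key n d hd)
  simp only [coeff_add, coeff_C_mul, coeff_mul_X_pow', coeff_derivative] at h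
  cases j with
  | zero => simp at h; push_cast; linarith
  | succ m =>
    simp only [coeff_mul_X, show m + 1 + 1 - 2 = m from rfl,
      show m + 1 + 1 - 2 + 1 = m + 1 from rfl] at h
    push_cast at h ⊢
    linarith

lemma kac_sum_fin_ite {n : ℕ} (k : ℕ) (f : Fin (n+1) → ℝ) :
    (∑ j : Fin (n+1), if (j:ℕ) = k then f j else 0)
      = if h : k < n+1 then f ⟨k,h⟩ else 0 := by
  split
  · next h =>
    have e : ∀ j : Fin (n+1), ((j:ℕ) = k) = (j = ⟨k,h⟩) := fun j => by
      simp [Fin.ext_iff]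
    simp_rw [e]
    simp
  · next h =>
    apply Finset.sum_eq_zero
    intro j _
    rw [if_neg (by omega)]

lemma kac_mulVec (n : ℕ) (w : ℕ → ℝ) (hw : ∀ k, n < k → w k = 0) (i : Fin (n+1)) :
    (kacMatrix n).mulVec (fun j => w j) i
      = (i:ℝ) * w ((i:ℕ)-1) + ((n:ℝ) - (i:ℕ)) * w ((i:ℕ)+1) := by
  have hsplit : ∀ j : Fin (n+1), kacMatrix n i j * w j
      = (if (j:ℕ) = (i:ℕ)-1 then (i:ℝ) * w j else 0)
        + (if (j:ℕ) = (i:ℕ)+1 then ((n:ℝ) - (i:ℕ)) * w j else 0) := by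
    intro j
    simp only [kacMatrix, Matrix.of_apply]
    split_ifs with h1 h2 h3 h4 h5 h6 h7
    all_goals try (exfalso; omega)
    all_goals try ring
    all_goals
      try (rw [show ((j:ℕ):ℝ) = ((i:ℕ):ℝ)+1 from by
        exact_mod_cast (show (j:ℕ) = (i:ℕ)+1 by omega)]; ring)
    all_goals
      (rw [show ((i:ℕ):ℝ) = 0 from by
        exact_mod_cast (show (i:ℕ) = 0 by omega)]; ring)
  simp only [Matrix.mulVec, dotProduct]
  simp_rw [hsplit]
  rw [Finset.sum_add_distrib, kac_sum_fin_ite, kac_sum_fin_ite,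
    dif_pos (show (i:ℕ)-1 < n+1 by omega)]
  by_cases hn : (i:ℕ) + 1 < n + 1
  · rw [dif_pos hn]
  · rw [dif_neg hn, hw ((i:ℕ)+1) (by omega)]
    ring

lemma kac_chooseA (n j : ℕ) (hj : j < n) :
    (n.choose (j+1) : ℝ) * ((j:ℝ)+1) = (n.choose j : ℝ) * ((n:ℝ) - j) := by
  have h := Nat.choose_succ_right_eq n j
  have : ((n.choose (j+1) * (j+1) : ℕ) : ℝ) = ((n.choose j * (n - j) : ℕ) : ℝ) := by
    exact_mod_cast congrArg (Nat.cast : ℕ → ℝ) h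
  push_cast [Nat.cast_sub hj.le] at this
  linarith

lemma kacW_rec_zero_n (n d : ℕ) (hd : d ≤ n)
    (h1 : (kacP n d).coeff 1 = ((n:ℝ) - 2*d) * (kacP n d).coeff 0)
    (hc0 : (kacP n d).coeff 0 = 1) :
    (0:ℝ) * ((kacP n d).coeff (0-1) / (n.choose (0-1) : ℝ))
      + ((n:ℝ) - 0) * ((kacP n d).coeff (0+1) / (n.choose (0+1) : ℝ))
    = ((n:ℝ) - 2*d) * ((kacP n d).coeff 0 / (n.choose 0 : ℝ)) := by
  rcases Nat.eq_zero_or_pos n with h | h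
  · subst h
    have hd0 : d = 0 := by omega
    subst hd0
    norm_num at h1 ⊢
  · have hn : ((n:ℕ):ℝ) ≠ 0 := Nat.cast_ne_zero.2 (by omega)
    rw [Nat.choose_one_right, Nat.choose_zero_right]
    rw [h1]
    field_simp
    push_cast; ring

lemma kacW_rec_succ (n d j : ℕ) (hd : d ≤ n) (hj : j + 1 ≤ n)
    (hrec : ((j:ℝ)+2) * (kacP n d).coeff (j+2) + ((n:ℝ) - j) * (kacP n d).coeff j
      = ((n:ℝ) - 2*d) * (kacP n d).coeff (j+1))
    (hhi : ∀ k, n < k → (kacP n d).coeff k = 0) :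
    ((j:ℝ)+1) * ((kacP n d).coeff j / (n.choose j : ℝ))
      + ((n:ℝ) - ((j:ℝ)+1)) * ((kacP n d).coeff (j+2) / (n.choose (j+2) : ℝ))
    = ((n:ℝ) - 2*d) * ((kacP n d).coeff (j+1) / (n.choose (j+1) : ℝ)) := by
  have hcj : (n.choose j : ℝ) ≠ 0 := Nat.cast_ne_zero.2 (Nat.choose_pos (by omega)).ne'
  have hcj1 : (n.choose (j+1) : ℝ) ≠ 0 := Nat.cast_ne_zero.2 (Nat.choose_pos hj).ne'
  have hA := kac_chooseA n j (by omega)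
  have hterm1 : ((j:ℝ)+1) * ((kacP n d).coeff j / (n.choose j : ℝ))
      = ((n:ℝ) - j) * (kacP n d).coeff j / (n.choose (j+1) : ℝ) := by
    field_simp
    linear_combination (kacP n d).coeff j * hA
  have hterm2 : ((n:ℝ) - ((j:ℝ)+1)) * ((kacP n d).coeff (j+2) / (n.choose (j+2) : ℝ))
      = ((j:ℝ)+2) * (kacP n d).coeff (j+2) / (n.choose (j+1) : ℝ) := by
    rcases eq_or_lt_of_le hj with he | hl
    · rw [hhi (j+2) (by omega)]
      simp
    · have hcj2 : (n.choose (j+2) : ℝ) ≠ 0 := Nat.cast_ne_zero.2 (Nat.choose_pos hl).ne'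
      have hB : (n.choose (j+2) : ℝ) * ((j:ℝ)+2)
          = (n.choose (j+1) : ℝ) * ((n:ℝ) - ((j:ℝ)+1)) := by
        have h := kac_chooseA n (j+1) hl
        push_cast at h
        convert h using 2 <;> push_cast <;> ring
      field_simp
      linear_combination (-(kacP n d).coeff (j+2)) * hB
  rw [hterm1, hterm2]
  field_simp
  linear_combination hrec

noncomputable def kacV (n d : ℕ) : ℕ → ℝ := fun k => (kacP n d).coeff k / (n.choose k : ℝ)

lemma kacV_hi (n d : ℕ) (hd : d ≤ n) : ∀ k, n < k → kacV n d k = 0 := fun k hk => by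
  simp [kacV, kacP_coeff_hi n d k hd hk]

lemma kacV_rec (n d : ℕ) (hd : d ≤ n) (k : ℕ) (hk : k ≤ n) :
    (k:ℝ) * kacV n d (k-1) + ((n:ℝ) - k) * kacV n d (k+1)
      = ((n:ℝ) - 2*d) * kacV n d k := by
  cases k with
  | zero =>
    simp only [kacV]
    simpa using kacW_rec_zero_n n d hd (kacP_rec0 n d hd) (kacP_coeff_zero n d)
  | succ j =>
    simp only [kacV]
    have h := kacW_rec_succ n d j hd hk (kacP_rec n d hd j)
      (fun k hk => kacP_coeff_hi n d k hd hk)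
    push_cast
    try simp only [Nat.add_sub_cancel]
    exact h

lemma kac_hasEigen (n d : ℕ) (hd : d ≤ n) :
    ∃ v : Fin (n+1) → ℝ, v ≠ 0 ∧ (kacMatrix n).mulVec v = ((n:ℝ) - 2*d) • v := by
  refine ⟨fun j => kacV n d (j:ℕ), ?_, ?_⟩
  · intro h
    have h1 := congrFun h 0
    simp only [Pi.zero_apply] at h1
    rw [show ((0 : Fin (n+1)):ℕ) = 0 from rfl] at h1
    rw [show kacV n d 0 = 1 from by simp [kacV, kacP_coeff_zero]] at h1
    exact one_ne_zero h1
  · funext i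
    rw [kac_mulVec n (kacV n d) (kacV_hi n d hd) i]
    simp only [Pi.smul_apply, smul_eq_mul]
    exact kacV_rec n d hd (i:ℕ) (by omega)

lemma kac_eval_charpoly {m : Type*} [Fintype m] [DecidableEq m] (M : Matrix m m ℝ) (μ : ℝ) :
    M.charpoly.eval μ = (μ • (1 : Matrix m m ℝ) - M).det := by
  rw [Matrix.charpoly, ← Polynomial.coe_evalRingHom, RingHom.map_det]
  congr 1
  ext i j
  by_cases h : i = j
  · subst h
    simp [Matrix.charmatrix_apply_eq, Matrix.one_apply, Matrix.sub_apply]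
  · simp [Matrix.charmatrix_apply_ne _ _ _ h, Matrix.one_apply_ne h, Matrix.sub_apply, h]

end Aux

/-- The eigenvalues of the Kac matrix are exactly `n, n-2, ..., -n`, each with
algebraic multiplicity one: the multiset of roots of the characteristic
polynomial is exactly `{n - 2d : 0 ≤ d ≤ n}` (each with multiplicity one), and
a real number is an eigenvalue iff it is of the form `n - 2d` with `0 ≤ d ≤ n`. -/
theorem kac_eigenvalues (n : ℕ) :
    ((kacMatrix n).charpoly).roots
        = (Finset.range (n + 1)).val.map (fun d => (n : ℝ) - 2 * d) ∧
      ∀ μ : ℝ, (∃ v : Fin (n + 1) → ℝ, v ≠ 0 ∧ (kacMatrix n).mulVec v = μ • v) ↔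
        ∃ d : ℕ, d ≤ n ∧ μ = (n : ℝ) - 2 * d := by
  have hPm : ((kacMatrix n).charpoly).Monic := (kacMatrix n).charpoly_monic
  have hPne : ((kacMatrix n).charpoly) ≠ 0 := hPm.ne_zero
  have hround : ∀ μ : ℝ,
      (∃ v : Fin (n + 1) → ℝ, v ≠ 0 ∧ (kacMatrix n).mulVec v = μ • v) →
      ((kacMatrix n).charpoly).eval μ = 0 := by
    rintro μ ⟨v, hv0, hv⟩
    rw [kac_eval_charpoly]
    refine (Matrix.exists_mulVec_eq_zero_iff
      (M := μ • (1 : Matrix (Fin (n+1)) (Fin (n+1)) ℝ) - kacMatrix n)).1 ⟨v, hv0, ?_⟩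
    rw [Matrix.sub_mulVec, Matrix.smul_mulVec, Matrix.one_mulVec, hv, sub_self]
  have hroot : ∀ d : ℕ, d ≤ n → ((kacMatrix n).charpoly).eval ((n:ℝ) - 2*d) = 0 :=
    fun d hd => hround _ (kac_hasEigen n d hd)
  have hdeg : ((kacMatrix n).charpoly).natDegree = n + 1 := by
    rw [Matrix.charpoly_natDegree_eq_dim]
    simp
  have hinj : Function.Injective (fun d : ℕ => (n:ℝ) - 2 * (d:ℝ)) := by
    intro a b hab
    simp only at hab
    have : (a:ℝ) = b := by linarith
    exact_mod_cast this
  have hnd : ((Finset.range (n + 1)).val.map (fun d : ℕ => (n : ℝ) - 2 * (d:ℝ))).Nodup :=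
    Multiset.Nodup.map hinj (Finset.range (n+1)).nodup
  have hle : (Finset.range (n + 1)).val.map (fun d : ℕ => (n : ℝ) - 2 * (d:ℝ))
      ≤ ((kacMatrix n).charpoly).roots := by
    rw [Multiset.le_iff_subset hnd]
    intro x hx
    obtain ⟨d, hd, rfl⟩ := Multiset.mem_map.1 hx
    rw [Polynomial.mem_roots hPne]
    refine hroot d ?_
    have := Finset.mem_range.1 (Eq.mp Finset.mem_val hd)
    omega
  have hcard : ((kacMatrix n).charpoly).roots.card ≤ n + 1 := by
    have h := ((kacMatrix n).charpoly).card_roots'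
    rw [hdeg] at h
    exact h
  have hr : ((kacMatrix n).charpoly).roots
      = (Finset.range (n + 1)).val.map (fun d : ℕ => (n : ℝ) - 2 * (d:ℝ)) := by
    refine (Multiset.eq_of_le_of_card_le hle ?_).symm
    rw [Multiset.card_map]
    simpa using hcard
  refine ⟨?_, fun μ => ⟨?_, ?_⟩⟩
  · rw [hr]
    simp [Multiset.map_map]
  · intro h
    have h0 := hround μ h
    have hmem : μ ∈ ((kacMatrix n).charpoly).roots := (Polynomial.mem_roots hPne).2 h0
    rw [hr] at hmem
    obtain ⟨d, hd, he⟩ := Multiset.mem_map.1 hmem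
    refine ⟨d, ?_, he.symm⟩
    have := Finset.mem_range.1 (Eq.mp Finset.mem_val hd)
    omega
  · rintro ⟨d, hd, rfl⟩
    exact kac_hasEigen n d hd
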